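/- arXiv:math/0612790 — 2 statements merged into one kernel-verified Lean document; each statement's English description precedes it below -/
import Mathlib

section
/- Let Ω ⊆ ℂ be a nonempty open connected set, let K be a complex Hilbert space, let θ : ℂ → ℂ be differentiable on Ω with θ(z₀) ≠ 0 for some z₀ ∈ Ω, let φ : ℂ → L(K) be differentiable on Ω, and let λ > 0 be such that ‖(φ(z))* x‖ ≤ λ · |θ(z)| · ‖x‖ for all z ∈ Ω and all x ∈ K. Then there exists a function F : ℂ → L(K), differentiable on Ω, with ‖F(z)‖ ≤ λ for all z ∈ Ω and φ(z) = θ(z) • F(z) for all z ∈ Ω. -/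
open Filter Metric Set Function Topology

/-- If `‖(φ z)* x‖ ≤ λ |θ z| ‖x‖` on a nonempty open connected `Ω` with `θ` analytic and
not identically zero, and `φ` analytic, then `θ` divides `φ`: `φ = θ • F` for some
analytic `F` bounded by `λ` on `Ω`. -/
theorem divides_of_adjoint_norm_le
    (Ω : Set ℂ) (hΩo : IsOpen Ω) (hΩc : IsConnected Ω)
    {K : Type*} [NormedAddCommGroup K] [InnerProductSpace ℂ K] [CompleteSpace K]
    (θ : ℂ → ℂ) (hθ : DifferentiableOn ℂ θ Ω)
    (z₀ : ℂ) (hz₀ : z₀ ∈ Ω) (hθz₀ : θ z₀ ≠ 0)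
    (φ : ℂ → (K →L[ℂ] K)) (hφ : DifferentiableOn ℂ φ Ω)
    (lam : ℝ) (hlam : 0 < lam)
    (hineq : ∀ z ∈ Ω, ∀ x : K,
      ‖ContinuousLinearMap.adjoint (φ z) x‖ ≤ lam * ‖θ z‖ * ‖x‖) :
    ∃ F : ℂ → (K →L[ℂ] K), DifferentiableOn ℂ F Ω ∧ (∀ z ∈ Ω, ‖F z‖ ≤ lam) ∧
      ∀ z ∈ Ω, φ z = θ z • F z := by
  classical
  have hθa : AnalyticOnNhd ℂ θ Ω := hθ.analyticOnNhd hΩo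
  -- pointwise norm bound on φ
  have hφ0 : ∀ z ∈ Ω, ‖φ z‖ ≤ lam * ‖θ z‖ := by
    intro z hz
    have h1 : ‖ContinuousLinearMap.adjoint (φ z)‖ ≤ lam * ‖θ z‖ :=
      ContinuousLinearMap.opNorm_le_bound _ (by positivity) (hineq z hz)
    calc ‖φ z‖ = ‖ContinuousLinearMap.adjoint (φ z)‖ :=
          (ContinuousLinearMap.adjoint.norm_map (φ z)).symm
      _ ≤ _ := h1
  -- at zeros of θ, φ vanishes
  have hφzero : ∀ z ∈ Ω, θ z = 0 → φ z = 0 := by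
    intro z hz h0
    have := hφ0 z hz
    rw [h0] at this
    simp only [map_zero, norm_zero, mul_zero] at this
    exact norm_le_zero_iff.mp this
  set G : ℂ → (K →L[ℂ] K) := fun w => (θ w)⁻¹ • φ w with hGdef
  have hGnorm : ∀ w ∈ Ω, ‖G w‖ ≤ lam := by
    intro w hw
    by_cases h : θ w = 0
    · simp only [hGdef, h, inv_zero, zero_smul, norm_zero]
      exact hlam.le
    · have hne : ‖θ w‖ ≠ 0 := norm_ne_zero_iff.mpr h
      have : ‖G w‖ = ‖θ w‖⁻¹ * ‖φ w‖ := by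
        simp [hGdef, norm_smul]
      rw [this, inv_mul_le_iff₀ (lt_of_le_of_ne (norm_nonneg _) (Ne.symm hne))]
      calc ‖φ w‖ ≤ lam * ‖θ w‖ := hφ0 w hw
        _ = lam * ‖θ w‖ := rfl
        _ = ‖θ w‖ * lam := mul_comm _ _
  set F : ℂ → (K →L[ℂ] K) := fun z => if θ z = 0 then limUnder (𝓝[≠] z) G else G z with hFdef
  have hFG : ∀ z, θ z ≠ 0 → F z = G z := by
    intro z hz; simp [hFdef, hz]
  have hGdiff : ∀ w ∈ Ω, θ w ≠ 0 → DifferentiableAt ℂ G w := by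
    intro w hw h
    exact ((hθ.differentiableAt (hΩo.mem_nhds hw)).inv h).smul
      (hφ.differentiableAt (hΩo.mem_nhds hw))
  -- key removable-singularity argument at zeros of θ
  have key : ∀ c ∈ Ω, θ c = 0 → DifferentiableAt ℂ F c ∧ ‖F c‖ ≤ lam := by
    intro c hc h0
    -- θ is eventually nonzero near c (punctured)
    have hev : ∀ᶠ z in 𝓝[≠] c, θ z ≠ 0 := by
      rcases (hθa c hc).eventually_eq_zero_or_eventually_ne_zero with h | h
      · exfalso
        exact hθz₀ (hθa.eqOn_zero_of_preconnected_of_eventuallyEq_zero hΩc.isPreconnected hc h hz₀)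
      · exact h
    have hev' : ∀ᶠ z in 𝓝 c, z ≠ c → θ z ≠ 0 := eventually_nhdsWithin_iff.mp hev
    rcases Metric.eventually_nhds_iff.mp hev' with ⟨ε, hε, hεne⟩
    rcases Metric.isOpen_iff.mp hΩo c hc with ⟨δ, hδ, hδΩ⟩
    set r := min ε δ with hr
    have hrpos : 0 < r := lt_min hε hδ
    have hBΩ : ball c r ⊆ Ω := fun w hw => hδΩ (mem_ball.mpr (lt_of_lt_of_le (mem_ball.mp hw) (min_le_right _ _)))
    have hBne : ∀ w ∈ ball c r \ {c}, θ w ≠ 0 := by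
      intro w hw
      exact hεne (lt_of_lt_of_le (mem_ball.mp hw.1) (min_le_left _ _)) hw.2
    have hBnhds : ball c r ∈ 𝓝 c := Metric.ball_mem_nhds c hrpos
    have hd : DifferentiableOn ℂ G (ball c r \ {c}) := by
      intro w hw
      exact (hGdiff w (hBΩ hw.1) (hBne w hw)).differentiableWithinAt
    have hb : BddAbove (norm ∘ G '' (ball c r \ {c})) := by
      refine ⟨lam, ?_⟩
      rintro x ⟨w, hw, rfl⟩
      exact hGnorm w (hBΩ hw.1)
    have hupd : DifferentiableOn ℂ (update G c (limUnder (𝓝[≠] c) G)) (ball c r) :=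
      Complex.differentiableOn_update_limUnder_of_bddAbove hBnhds hd hb
    have heq : F =ᶠ[𝓝 c] update G c (limUnder (𝓝[≠] c) G) := by
      filter_upwards [hBnhds] with w hw
      by_cases hwc : w = c
      · subst hwc
        simp [hFdef, h0, update_self]
      · rw [hFG w (hBne w ⟨hw, hwc⟩), update_of_ne hwc]
    have hdiffc : DifferentiableAt ℂ (update G c (limUnder (𝓝[≠] c) G)) c :=
      hupd.differentiableAt hBnhds
    have hFdiff : DifferentiableAt ℂ F c := hdiffc.congr_of_eventuallyEq heq
    -- norm bound at c via the limit
    have hFcval : F c = update G c (limUnder (𝓝[≠] c) G) c := by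
      simp [hFdef, h0]
    have hcont : ContinuousAt (update G c (limUnder (𝓝[≠] c) G)) c := hdiffc.continuousAt
    have htend : Tendsto G (𝓝[ball c r \ {c}] c) (𝓝 (F c)) := by
      rw [hFcval]
      refine (hcont.continuousWithinAt.tendsto).congr' ?_
      filter_upwards [self_mem_nhdsWithin] with w hw
      exact update_of_ne hw.2 _ G
    have hNe : 𝓝[ball c r \ {c}] c = 𝓝[≠] c := by
      rw [diff_eq, nhdsWithin_inter_of_mem (mem_nhdsWithin_of_mem_nhds hBnhds)]
    rw [hNe] at htend
    have hbound : ‖F c‖ ≤ lam := by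
      refine le_of_tendsto htend.norm ?_
      have hmem : ∀ᶠ w in 𝓝[≠] c, w ∈ ball c r \ {c} := hNe ▸ eventually_mem_nhdsWithin
      filter_upwards [hmem] with w hw
      exact hGnorm w (hBΩ hw.1)
    exact ⟨hFdiff, hbound⟩
  refine ⟨F, ?_, ?_, ?_⟩
  · intro z hz
    by_cases h0 : θ z = 0
    · exact (key z hz h0).1.differentiableWithinAt
    · have hev : ∀ᶠ w in 𝓝 z, θ w ≠ 0 :=
        (hθ.continuousOn.continuousAt (hΩo.mem_nhds hz)).eventually_ne h0
      have heq : F =ᶠ[𝓝 z] G := by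
        filter_upwards [hev] with w hw using hFG w hw
      exact ((hGdiff z hz h0).congr_of_eventuallyEq heq).differentiableWithinAt
  · intro z hz
    by_cases h0 : θ z = 0
    · exact (key z hz h0).2
    · rw [hFG z h0]; exact hGnorm z hz
  · intro z hz
    by_cases h0 : θ z = 0
    · rw [hφzero z hz h0, h0, zero_smul]
    · rw [hFG z h0, hGdef]
      simp [smul_smul, mul_inv_cancel₀ h0]
end

section
/- Let Ω ⊆ ℂ be a nonempty open connected set, let n ≥ 1, let θ : ℂ → ℂ be differentiable on Ω with θ(z₀) ≠ 0 for some z₀ ∈ Ω, let φ : ℂ → L(ℂⁿ) (continuous linear operators on EuclideanSpace ℂ (Fin n)) be differentiable on Ω, and let λ > 0 be such that |θ(z)| · ‖x‖ ≤ λ · ‖(φ(z))* x‖ for all z ∈ Ω and all x ∈ ℂⁿ. Then there exists ψ : ℂ → L(ℂⁿ), differentiable on Ω, with ‖ψ(z)‖ ≤ λ for all z ∈ Ω, such that φ(z) ∘ ψ(z) = θ(z) • id and ψ(z) ∘ φ(z) = θ(z) • id for all z ∈ Ω. -/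
open Topology Filter

open ContinuousLinearMap in
lemma aux_unit {n : ℕ} (A : EuclideanSpace ℂ (Fin n) →L[ℂ] EuclideanSpace ℂ (Fin n))
    (c : ℝ) (hc : 0 < c) (h : ∀ x, c * ‖x‖ ≤ ‖ContinuousLinearMap.adjoint A x‖) :
    ∃ B : EuclideanSpace ℂ (Fin n) →L[ℂ] EuclideanSpace ℂ (Fin n),
      B * A = 1 ∧ A * B = 1 ∧ ‖B‖ ≤ c⁻¹ := by
  set E := EuclideanSpace ℂ (Fin n)
  set A' : E →L[ℂ] E := ContinuousLinearMap.adjoint A with hA'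
  have hinj : Function.Injective A' := by
    intro x y hxy
    have : A' (x - y) = 0 := by rw [map_sub, hxy, sub_self]
    have h2 := h (x - y)
    rw [this, norm_zero] at h2
    have h3 : ‖x - y‖ = 0 := by nlinarith [norm_nonneg (x - y)]
    exact sub_eq_zero.mp (norm_eq_zero.mp h3)
  have hsurj : Function.Surjective (A' : E →ₗ[ℂ] E) :=
    (LinearMap.injective_iff_surjective).mp hinj
  let e : E ≃ₗ[ℂ] E := LinearEquiv.ofBijective (A' : E →ₗ[ℂ] E) ⟨hinj, hsurj⟩
  let B₀ : E →L[ℂ] E := LinearMap.toContinuousLinearMap (e.symm : E →ₗ[ℂ] E)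
  have hBA' : A'.comp B₀ = ContinuousLinearMap.id ℂ E :=
    ContinuousLinearMap.ext fun x => e.apply_symm_apply x
  have hA'B : B₀.comp A' = ContinuousLinearMap.id ℂ E :=
    ContinuousLinearMap.ext fun x => e.symm_apply_apply x
  have hB₀ : ‖B₀‖ ≤ c⁻¹ := by
    refine ContinuousLinearMap.opNorm_le_bound _ (by positivity) fun y => ?_
    have hy : A' (B₀ y) = y := congrFun (congrArg DFunLike.coe hBA') y
    have := h (B₀ y)
    rw [hy] at this
    rw [← le_div_iff₀' hc] at this
    simpa [div_eq_inv_mul] using this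
  refine ⟨ContinuousLinearMap.adjoint B₀, ?_, ?_, ?_⟩
  · have := congrArg (ContinuousLinearMap.adjoint) hBA'
    rwa [ContinuousLinearMap.adjoint_comp, ContinuousLinearMap.adjoint_adjoint,
      ContinuousLinearMap.adjoint_id] at this
  · have := congrArg (ContinuousLinearMap.adjoint) hA'B
    rwa [ContinuousLinearMap.adjoint_comp, ContinuousLinearMap.adjoint_adjoint,
      ContinuousLinearMap.adjoint_id] at this
  · rw [show ‖ContinuousLinearMap.adjoint B₀‖ = ‖B₀‖ from
      LinearIsometryEquiv.norm_map _ B₀]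
    exact hB₀

set_option maxHeartbeats 2000000 in
/-- If `|θ z| ‖x‖ ≤ λ ‖(φ z)* x‖` on a nonempty open connected `Ω`, `θ` analytic and not
identically zero, `φ : Ω → L(ℂⁿ)` analytic, then `φ` divides `θ`: there is an analytic
`ψ` bounded by `λ` with `φψ = θ • id = ψφ` on `Ω`. -/
theorem divides_scalar_of_abs_le_adjoint
    (Ω : Set ℂ) (hΩo : IsOpen Ω) (hΩc : IsConnected Ω)
    (n : ℕ) (hn : 1 ≤ n)
    (θ : ℂ → ℂ) (hθ : DifferentiableOn ℂ θ Ω)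
    (z₀ : ℂ) (hz₀ : z₀ ∈ Ω) (hθz₀ : θ z₀ ≠ 0)
    (φ : ℂ → (EuclideanSpace ℂ (Fin n) →L[ℂ] EuclideanSpace ℂ (Fin n)))
    (hφ : DifferentiableOn ℂ φ Ω)
    (lam : ℝ) (hlam : 0 < lam)
    (hineq : ∀ z ∈ Ω, ∀ x : EuclideanSpace ℂ (Fin n),
      ‖θ z‖ * ‖x‖ ≤ lam * ‖ContinuousLinearMap.adjoint (φ z) x‖) :
    ∃ ψ : ℂ → (EuclideanSpace ℂ (Fin n) →L[ℂ] EuclideanSpace ℂ (Fin n)),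
      DifferentiableOn ℂ ψ Ω ∧ (∀ z ∈ Ω, ‖ψ z‖ ≤ lam) ∧
      (∀ z ∈ Ω, (φ z).comp (ψ z) = θ z • ContinuousLinearMap.id ℂ (EuclideanSpace ℂ (Fin n))) ∧
      (∀ z ∈ Ω, (ψ z).comp (φ z) = θ z • ContinuousLinearMap.id ℂ (EuclideanSpace ℂ (Fin n))) := by
  classical
  set E := EuclideanSpace ℂ (Fin n)
  -- differentiability at points
  have hθat : ∀ z ∈ Ω, DifferentiableAt ℂ θ z := fun z hz =>
    hθ.differentiableAt (hΩo.mem_nhds hz)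
  have hφat : ∀ z ∈ Ω, DifferentiableAt ℂ φ z := fun z hz =>
    hφ.differentiableAt (hΩo.mem_nhds hz)
  -- invertibility where θ ≠ 0
  have key : ∀ z ∈ Ω, θ z ≠ 0 → IsUnit (φ z) ∧
      ‖Ring.inverse (φ z)‖ ≤ lam / ‖θ z‖ := by
    intro z hz hzθ
    have habs : 0 < ‖θ z‖ := norm_pos_iff.mpr hzθ
    have hc : 0 < ‖θ z‖ / lam := div_pos habs hlam
    obtain ⟨B, hBA, hAB, hBn⟩ := aux_unit (φ z) _ hc (fun x => by
      rw [div_mul_eq_mul_div, div_le_iff₀ hlam]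
      linarith [hineq z hz x])
    have hu : IsUnit (φ z) := ⟨⟨φ z, B, hAB, hBA⟩, rfl⟩
    refine ⟨hu, ?_⟩
    have : Ring.inverse (φ z) = B := by
      rw [show φ z = ((⟨φ z, B, hAB, hBA⟩ : (E →L[ℂ] E)ˣ) : E →L[ℂ] E) from rfl,
        Ring.inverse_unit]
      rfl
    rw [this]
    rw [inv_div] at hBn
    exact hBn
  set f : ℂ → E →L[ℂ] E := fun w => θ w • Ring.inverse (φ w) with hf
  have hf_diff : ∀ z ∈ Ω, θ z ≠ 0 → DifferentiableAt ℂ f z := fun z hz hzθ =>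
    (hθat z hz).smul ((hφat z hz).inverse (key z hz hzθ).1)
  have hf_bd : ∀ z ∈ Ω, θ z ≠ 0 → ‖f z‖ ≤ lam := by
    intro z hz hzθ
    have habs : 0 < ‖θ z‖ := norm_pos_iff.mpr hzθ
    have h1 : ‖f z‖ = ‖θ z‖ * ‖Ring.inverse (φ z)‖ := norm_smul (θ z) (Ring.inverse (φ z))
    rw [h1]
    calc ‖θ z‖ * ‖Ring.inverse (φ z)‖
        ≤ ‖θ z‖ * (lam / ‖θ z‖) := by
          exact mul_le_mul_of_nonneg_left (key z hz hzθ).2 habs.le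
      _ = lam := by field_simp
  -- zeros of θ are isolated
  have hθa : AnalyticOnNhd ℂ θ Ω := hθ.analyticOnNhd hΩo
  have hiso : ∀ z₁ ∈ Ω, ∃ r > 0, Metric.ball z₁ r ⊆ Ω ∧
      ∀ w ∈ Metric.ball z₁ r, w ≠ z₁ → θ w ≠ 0 := by
    intro z₁ hz₁
    have hne : ∀ᶠ w in 𝓝[≠] z₁, θ w ≠ 0 := by
      rcases (hθa z₁ hz₁).eventually_eq_zero_or_eventually_ne_zero with h | h
      · exact absurd ((hθa.eqOn_zero_of_preconnected_of_eventuallyEq_zero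
          hΩc.isPreconnected hz₁ h) hz₀) hθz₀
      · exact h
    rw [eventually_nhdsWithin_iff] at hne
    have hmem : {w | w ≠ z₁ → θ w ≠ 0} ∩ Ω ∈ 𝓝 z₁ :=
      Filter.inter_mem hne (hΩo.mem_nhds hz₁)
    obtain ⟨r, hr, hball⟩ := Metric.mem_nhds_iff.mp hmem
    exact ⟨r, hr, fun w hw => (hball hw).2, fun w hw hw1 => (hball hw).1 hw1⟩
  -- definition of ψ
  set ψ : ℂ → E →L[ℂ] E := fun z => if θ z = 0 then limUnder (𝓝[≠] z) f else f z
    with hψdef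
  have hψ_eq_f : ∀ z, θ z ≠ 0 → ψ z = f z := fun z hz => if_neg hz
  -- local differentiability
  have hloc : ∀ z₁ ∈ Ω, ∃ r > 0, Metric.ball z₁ r ⊆ Ω ∧
      DifferentiableOn ℂ ψ (Metric.ball z₁ r) := by
    intro z₁ hz₁
    by_cases hzθ : θ z₁ = 0
    · obtain ⟨r, hr, hsub, hne⟩ := hiso z₁ hz₁
      have hdf : DifferentiableOn ℂ f (Metric.ball z₁ r \ {z₁}) := fun w hw =>
        (hf_diff w (hsub hw.1) (hne w hw.1 hw.2)).differentiableWithinAt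
      have hbd : BddAbove (norm ∘ f '' (Metric.ball z₁ r \ {z₁})) := by
        refine ⟨lam, ?_⟩
        rintro - ⟨w, ⟨hwB, hw1⟩, rfl⟩
        exact hf_bd w (hsub hwB) (hne w hwB hw1)
      have hupd := Complex.differentiableOn_update_limUnder_of_bddAbove
        (Metric.ball_mem_nhds z₁ hr) hdf hbd
      refine ⟨r, hr, hsub, hupd.congr fun w hw => ?_⟩
      by_cases hwz : w = z₁
      · subst hwz
        simp [hψdef, hzθ, Function.update_self]
      · rw [hψ_eq_f w (hne w hw hwz), Function.update_of_ne hwz]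
    · have hopen : IsOpen (Ω ∩ θ ⁻¹' {(0:ℂ)}ᶜ) :=
        hθ.continuousOn.isOpen_inter_preimage hΩo isOpen_compl_singleton
      obtain ⟨r, hr, hball⟩ := Metric.mem_nhds_iff.mp
        (hopen.mem_nhds ⟨hz₁, hzθ⟩)
      refine ⟨r, hr, fun w hw => (hball hw).1, ?_⟩
      intro w hw
      refine ((hf_diff w (hball hw).1 (hball hw).2).differentiableWithinAt).congr
        (fun u hu => hψ_eq_f u (hball hu).2) (hψ_eq_f w (hball hw).2)
  have hψ_diff : DifferentiableOn ℂ ψ Ω := by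
    intro z hz
    obtain ⟨r, hr, hsub, hd⟩ := hloc z hz
    exact (hd.differentiableAt (Metric.ball_mem_nhds z hr)).differentiableWithinAt
  have hψ_cont : ∀ z ∈ Ω, ContinuousAt ψ z := by
    intro z hz
    obtain ⟨r, hr, hsub, hd⟩ := hloc z hz
    exact (hd.differentiableAt (Metric.ball_mem_nhds z hr)).continuousAt
  -- eventual equalities on punctured neighborhoods
  have hev : ∀ z₁ ∈ Ω, ∀ᶠ w in 𝓝[≠] z₁, θ w ≠ 0 ∧ w ∈ Ω := by
    intro z₁ hz₁
    obtain ⟨r, hr, hsub, hne⟩ := hiso z₁ hz₁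
    filter_upwards [self_mem_nhdsWithin,
      nhdsWithin_le_nhds (Metric.ball_mem_nhds z₁ hr)] with w hw1 hw2
    exact ⟨hne w hw2 hw1, hsub hw2⟩
  have hlim : ∀ z₁ ∈ Ω, Filter.Tendsto f (𝓝[≠] z₁) (𝓝 (ψ z₁)) := by
    intro z₁ hz₁
    have h1 : Filter.Tendsto ψ (𝓝[≠] z₁) (𝓝 (ψ z₁)) :=
      (hψ_cont z₁ hz₁).tendsto.mono_left nhdsWithin_le_nhds
    refine h1.congr' ?_
    filter_upwards [hev z₁ hz₁] with w hw
    exact hψ_eq_f w hw.1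
  -- norm bound
  have hψ_bd : ∀ z ∈ Ω, ‖ψ z‖ ≤ lam := by
    intro z hz
    refine le_of_tendsto ((hlim z hz).norm) ?_
    filter_upwards [hev z hz] with w hw
    exact hf_bd w hw.2 hw.1
  -- the identities
  have hid1 : ∀ z ∈ Ω, (φ z) * (ψ z) = θ z • (1 : E →L[ℂ] E) := by
    intro z hz
    have t1 : Filter.Tendsto (fun w => φ w * ψ w) (𝓝[≠] z) (𝓝 (φ z * ψ z)) :=
      (((hφat z hz).continuousAt.tendsto.mono_left nhdsWithin_le_nhds).mul
        ((hψ_cont z hz).tendsto.mono_left nhdsWithin_le_nhds))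
    have t2 : Filter.Tendsto (fun w => θ w • (1 : E →L[ℂ] E)) (𝓝[≠] z)
        (𝓝 (θ z • (1 : E →L[ℂ] E))) :=
      ((hθat z hz).continuousAt.tendsto.mono_left nhdsWithin_le_nhds).smul
        tendsto_const_nhds
    refine tendsto_nhds_unique (t1.congr' ?_) t2
    filter_upwards [hev z hz] with w hw
    rw [hψ_eq_f w hw.1, hf]
    simp only [mul_smul_comm]
    rw [Ring.mul_inverse_cancel _ (key w hw.2 hw.1).1]
  have hid2 : ∀ z ∈ Ω, (ψ z) * (φ z) = θ z • (1 : E →L[ℂ] E) := by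
    intro z hz
    have t1 : Filter.Tendsto (fun w => ψ w * φ w) (𝓝[≠] z) (𝓝 (ψ z * φ z)) :=
      (((hψ_cont z hz).tendsto.mono_left nhdsWithin_le_nhds).mul
        ((hφat z hz).continuousAt.tendsto.mono_left nhdsWithin_le_nhds))
    have t2 : Filter.Tendsto (fun w => θ w • (1 : E →L[ℂ] E)) (𝓝[≠] z)
        (𝓝 (θ z • (1 : E →L[ℂ] E))) :=
      ((hθat z hz).continuousAt.tendsto.mono_left nhdsWithin_le_nhds).smul
        tendsto_const_nhds
    refine tendsto_nhds_unique (t1.congr' ?_) t2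
    filter_upwards [hev z hz] with w hw
    rw [hψ_eq_f w hw.1, hf]
    simp only [smul_mul_assoc]
    rw [Ring.inverse_mul_cancel _ (key w hw.2 hw.1).1]
  exact ⟨ψ, hψ_diff, hψ_bd, fun z hz => hid1 z hz, fun z hz => hid2 z hz⟩
end
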